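/- Let G ⊂ ℂ be open, let h : G → ℂ be holomorphic and injective, and let E ⊂ G be a compact set. Then there exists a constant c ≥ 1 (depending on h, G, E) such that for all w₁, w₂ ∈ E, c⁻¹ · |w₂ − w₁| ≤ |h(w₂) − h(w₁)| ≤ c · |w₂ − w₁|. -/

import Mathlib

open Metric Set Complex Filter Topology

/-- An injective holomorphic function on an open set has nonvanishing derivative. -/
lemma deriv_ne_zero_of_injOn {G : Set ℂ} (hG : IsOpen G) {h : ℂ → ℂ}
    (hh : DifferentiableOn ℂ h G) (hinj : Set.InjOn h G) {a : ℂ} (ha : a ∈ G) :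
    deriv h a ≠ 0 := by
  intro hd0
  have hGa : G ∈ 𝓝 a := hG.mem_nhds ha
  have hha : AnalyticAt ℂ h a := hh.analyticAt hGa
  set f : ℂ → ℂ := fun z => h z - h a with hfdef
  have hf : AnalyticAt ℂ f a := hha.sub analyticAt_const
  have hne : ∀ᶠ z in 𝓝[≠] a, f z ≠ 0 := by
    have hev : ∀ᶠ z in 𝓝[≠] a, z ∈ G ∧ z ≠ a := by
      filter_upwards [nhdsWithin_le_nhds hGa, self_mem_nhdsWithin] with z h1 h2
      exact ⟨h1, h2⟩
    filter_upwards [hev] with z hz hz0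
    exact hz.2 (hinj hz.1 ha (by simpa [hfdef, sub_eq_zero] using hz0))
  have horder : analyticOrderAt f a ≠ ⊤ := by
    intro htop
    rw [analyticOrderAt_eq_top] at htop
    rcases ((htop.filter_mono nhdsWithin_le_nhds).and hne).exists with ⟨z, hz1, hz2⟩
    exact hz2 hz1
  set n := (analyticOrderAt f a).toNat with hndef
  have hn : analyticOrderAt f a = n := (ENat.coe_toNat horder).symm
  obtain ⟨g, hg, hga, hfg⟩ := (hf.analyticOrderAt_eq_natCast (n := n)).mp hn
  have hfa : f a = 0 := by simp [hfdef]
  have hn0 : n ≠ 0 := by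
    intro h0
    apply hga
    have h1 := hfg.self_of_nhds
    rw [h0] at h1
    simpa [hfa] using h1.symm
  have hdf : deriv f a = 0 := by
    have h1 : deriv f a = deriv h a := by
      simp [hfdef, deriv_sub_const]
    rw [h1, hd0]
  have hn1 : n ≠ 1 := by
    intro h1
    rw [h1] at hfg
    have hD : HasDerivAt (fun z => (z - a) ^ 1 • g z) (g a) a := by
      have h2 := ((hasDerivAt_id a).sub_const a).mul (hg.differentiableAt.hasDerivAt)
      simpa [smul_eq_mul, Pi.mul_def] using h2
    have h3 : deriv f a = g a := by
      rw [Filter.EventuallyEq.deriv_eq hfg]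
      exact hD.deriv
    exact hga (by rw [← h3, hdf])
  have hn2 : 2 ≤ n := by omega
  have hnC : (n : ℂ) ≠ 0 := Nat.cast_ne_zero.mpr hn0
  set c := Complex.exp (Complex.log (g a) / n) with hcdef
  have hc0 : c ≠ 0 := Complex.exp_ne_zero _
  have hcn : c ^ n = g a := by
    rw [hcdef, ← Complex.exp_nat_mul, mul_div_cancel₀ _ hnC, Complex.exp_log hga]
  set r : ℂ → ℂ := fun z => c * Complex.exp ((n : ℂ)⁻¹ * Complex.log (g z / g a)) with hrdef
  have hq : AnalyticAt ℂ (fun z => g z / g a) a := hg.div analyticAt_const hga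
  have hm : g a / g a ∈ Complex.slitPlane := by
    rw [div_self hga]; exact Complex.one_mem_slitPlane
  have hlog : AnalyticAt ℂ (fun z => Complex.log (g z / g a)) a := hq.clog hm
  have hexp : AnalyticAt ℂ (fun z => Complex.exp ((n : ℂ)⁻¹ * Complex.log (g z / g a))) a :=
    AnalyticAt.comp (f := fun z => (n : ℂ)⁻¹ * Complex.log (g z / g a)) (x := a)
      (Complex.differentiable_exp.analyticAt _) (analyticAt_const.mul hlog)
  have hr : AnalyticAt ℂ r a := analyticAt_const.mul hexp
  have hra : r a = c := by
    simp [hrdef, div_self hga, Complex.log_one]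
  have hrn : ∀ᶠ z in 𝓝 a, r z ^ n = g z := by
    have hgz : ∀ᶠ z in 𝓝 a, g z ≠ 0 := hg.continuousAt.eventually_ne hga
    filter_upwards [hgz] with z hz
    have hq0 : g z / g a ≠ 0 := div_ne_zero hz hga
    have : r z ^ n = c ^ n * Complex.exp ((n : ℂ) * ((n : ℂ)⁻¹ * Complex.log (g z / g a))) := by
      rw [hrdef, mul_pow, Complex.exp_nat_mul]
    rw [this, hcn, ← mul_assoc, mul_inv_cancel₀ hnC, one_mul, Complex.exp_log hq0]
    field_simp
  set ψ : ℂ → ℂ := fun z => (z - a) * r z with hψdef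
  have hψa : ψ a = 0 := by simp [hψdef]
  have hψeq : ∀ᶠ z in 𝓝 a, f z = ψ z ^ n := by
    filter_upwards [hfg, hrn] with z h1 h2
    rw [hψdef]
    simp only [mul_pow]
    rw [h2, h1, smul_eq_mul]
  have hrD : HasStrictDerivAt r (deriv r a) a :=
    (hr.contDiffAt (n := 1)).hasStrictDerivAt one_ne_zero
  have hψD : HasStrictDerivAt ψ c a := by
    have h2 := HasStrictDerivAt.mul ((hasStrictDerivAt_id a).sub_const a) hrD
    have h3 : 1 * r a + (id a - a) * deriv r a = c := by simp [hra]
    rw [h3] at h2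
    exact h2
  have hmap : Filter.map ψ (𝓝 a) = 𝓝 0 := by
    have h2 := hψD.map_nhds_eq hc0
    rwa [hψa] at h2
  set U := G ∩ {z | f z = ψ z ^ n} with hUdef
  have hU : U ∈ 𝓝 a := Filter.inter_mem hGa hψeq
  have hUim : ψ '' U ∈ 𝓝 (0 : ℂ) := by
    rw [← hmap]; exact Filter.image_mem_map hU
  obtain ⟨ε, hε, hball⟩ := Metric.mem_nhds_iff.mp hUim
  set ζ := Complex.exp ((2 * Real.pi / n : ℝ) * Complex.I) with hζdef
  have hζn : ζ ^ n = 1 := by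
    rw [hζdef, ← Complex.exp_nat_mul]
    have h2 : (n : ℂ) * ((2 * Real.pi / n : ℝ) * Complex.I) = 2 * Real.pi * Complex.I := by
      push_cast
      field_simp
    rw [h2, Complex.exp_two_pi_mul_I]
  have hπ := Real.pi_pos
  have hnR : (0 : ℝ) < n := by positivity
  have hζ1 : ζ ≠ 1 := by
    rw [hζdef]
    intro hcon
    rw [Complex.exp_eq_one_iff] at hcon
    obtain ⟨k, hk⟩ := hcon
    have h2 : ((2 * Real.pi / n : ℝ) : ℂ) = (k : ℂ) * (2 * Real.pi) := by
      have h3 : ((2 * Real.pi / n : ℝ) : ℂ) * Complex.I = ((k : ℂ) * (2 * Real.pi)) * Complex.I := by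
        rw [hk]; ring
      exact mul_right_cancel₀ Complex.I_ne_zero h3
    have h4 : (2 * Real.pi / n : ℝ) = (k : ℝ) * (2 * Real.pi) := by
      exact_mod_cast congrArg Complex.re h2
    have h5 : (0 : ℝ) < 2 * Real.pi / n := by positivity
    have h6 : 2 * Real.pi / n < 2 * Real.pi := by
      apply div_lt_self (by positivity)
      exact_mod_cast (by omega : 1 < n)
    have hk0 : (0 : ℝ) < (k : ℝ) := by nlinarith
    have hk1 : (1 : ℝ) ≤ (k : ℝ) := by
      exact_mod_cast (by exact_mod_cast hk0 : (0 : ℤ) < k)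
    nlinarith
  set w : ℂ := ((ε / 2 : ℝ) : ℂ) with hwdef
  have hw0 : w ≠ 0 := by
    simp only [hwdef, ne_eq, Complex.ofReal_eq_zero]
    positivity
  have hwb : w ∈ ball (0 : ℂ) ε := by
    simp only [mem_ball, dist_zero_right, hwdef, Complex.norm_real, Real.norm_eq_abs]
    rw [abs_of_pos (by positivity)]
    linarith
  have hζabs : ‖ζ‖ = 1 := by
    rw [hζdef, Complex.norm_exp]
    simp
  have hw'b : w * ζ ∈ ball (0 : ℂ) ε := by
    simp only [mem_ball, dist_zero_right] at hwb ⊢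
    rw [norm_mul]
    simpa [hζabs] using hwb
  obtain ⟨z₁, hz₁U, hz₁⟩ := hball hwb
  obtain ⟨z₂, hz₂U, hz₂⟩ := hball hw'b
  have hzz : z₁ ≠ z₂ := by
    intro hzz
    apply hζ1
    have hcalc : w = w * ζ := by rw [← hz₂, ← hz₁, hzz]
    exact (mul_left_cancel₀ hw0 (by rw [mul_one]; exact hcalc)).symm
  have hf12 : f z₁ = f z₂ := by
    have e₁ : f z₁ = ψ z₁ ^ n := hz₁U.2
    have e₂ : f z₂ = ψ z₂ ^ n := hz₂U.2
    rw [e₁, e₂, hz₁, hz₂, mul_pow, hζn, mul_one]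
  have : h z₁ = h z₂ := by
    have := hf12
    simp only [hfdef] at this
    exact sub_left_injective this
  exact hzz (hinj hz₁U.1 hz₂U.1 this)

/-- **Bilipschitz property (3.3).** An injective holomorphic map on an open set
`G ⊆ ℂ` is bilipschitz on every compact subset `E ⊆ G`. -/
theorem injOn_holomorphic_bilipschitz_on_compact
    (G : Set ℂ) (hG : IsOpen G) (h : ℂ → ℂ) (hh : DifferentiableOn ℂ h G)
    (hinj : InjOn h G) (E : Set ℂ) (hE : IsCompact E) (hEG : E ⊆ G) :
    ∃ c : ℝ, 1 ≤ c ∧ ∀ w₁ ∈ E, ∀ w₂ ∈ E,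
      c⁻¹ * dist w₂ w₁ ≤ dist (h w₂) (h w₁) ∧
      dist (h w₂) (h w₁) ≤ c * dist w₂ w₁ := by
  have key : ∀ a ∈ E, ∃ r > 0, ∃ C : ℝ, 1 ≤ C ∧ ∀ x ∈ ball a r, ∀ y ∈ ball a r,
      C⁻¹ * dist x y ≤ dist (h x) (h y) ∧ dist (h x) (h y) ≤ C * dist x y := by
    intro a haE
    have haG : a ∈ G := hEG haE
    have hd0 : deriv h a ≠ 0 := deriv_ne_zero_of_injOn hG hh hinj haG
    have hha : AnalyticAt ℂ h a := hh.analyticAt (hG.mem_nhds haG)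
    have hS : HasStrictDerivAt h (deriv h a) a :=
      (hha.contDiffAt (n := 1)).hasStrictDerivAt one_ne_zero
    set d := deriv h a with hddef
    have hd : 0 < ‖d‖ := norm_pos_iff.mpr hd0
    have hlo := hS.isLittleO
    have hev := hlo.def (by positivity : (0:ℝ) < ‖d‖ / 2)
    obtain ⟨ε, hε, hb⟩ := Metric.eventually_nhds_iff.mp hev
    refine ⟨ε, hε, max 1 (max (2 / ‖d‖) (3 * ‖d‖ / 2)), le_max_left _ _, ?_⟩
    set C := max 1 (max (2 / ‖d‖) (3 * ‖d‖ / 2)) with hCdef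
    intro x hx y hy
    have hxy : dist ((x, y) : ℂ × ℂ) (a, a) < ε := by
      rw [Prod.dist_eq]
      exact max_lt hx hy
    have hbd := hb hxy
    simp only [ContinuousLinearMap.smulRight_apply, ContinuousLinearMap.one_apply,
      ContinuousLinearMap.toSpanSingleton_apply, smul_eq_mul] at hbd
    have hnd : ‖(x - y) * d‖ = ‖d‖ * ‖x - y‖ := by rw [norm_mul]; ring
    have h1 : ‖(x - y) * d‖ - ‖h x - h y‖ ≤ ‖h x - h y - (x - y) * d‖ := by
      have h1' := norm_sub_norm_le ((x - y) * d) (h x - h y)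
      rwa [norm_sub_rev ((x - y) * d) (h x - h y)] at h1'
    have h2 : ‖h x - h y‖ ≤ ‖(x - y) * d‖ + ‖h x - h y - (x - y) * d‖ := by
      have e : ‖h x - h y‖ = ‖(x - y) * d + (h x - h y - (x - y) * d)‖ := by
        congr 1; ring
      rw [e]
      exact norm_add_le _ _
    have hC2 : 2 / ‖d‖ ≤ C := le_trans (le_max_left _ _) (le_max_right _ _)
    have hC3 : 3 * ‖d‖ / 2 ≤ C := le_trans (le_max_right _ _) (le_max_right _ _)
    have hCinv : C⁻¹ ≤ ‖d‖ / 2 := by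
      rw [show ‖d‖ / 2 = (2 / ‖d‖)⁻¹ by rw [inv_div]]
      exact inv_anti₀ (by positivity) hC2
    rw [dist_eq_norm, dist_eq_norm]
    constructor
    · calc C⁻¹ * ‖x - y‖ ≤ ‖d‖ / 2 * ‖x - y‖ :=
            mul_le_mul_of_nonneg_right hCinv (norm_nonneg _)
        _ ≤ ‖h x - h y‖ := by nlinarith [norm_nonneg (x - y)]
    · calc ‖h x - h y‖ ≤ 3 * ‖d‖ / 2 * ‖x - y‖ := by nlinarith [norm_nonneg (x - y)]
        _ ≤ C * ‖x - y‖ := mul_le_mul_of_nonneg_right hC3 (norm_nonneg _)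
  choose! r hr C hC1 hbl using key
  have hcov : E ⊆ ⋃ a ∈ E, ball a (r a / 2) := by
    intro a haE
    exact mem_biUnion haE (mem_ball_self (by linarith [hr a haE]))
  obtain ⟨t, htE, htfin, htcov⟩ :=
    hE.elim_finite_subcover_image (fun a _ => isOpen_ball) hcov
  rcases t.eq_empty_or_nonempty with hte | htne
  · refine ⟨1, le_rfl, fun w₁ hw₁ w₂ hw₂ => ?_⟩
    exfalso
    have := htcov hw₁
    simp [hte] at this
  · set s := htfin.toFinset with hsdef
    have hsne : s.Nonempty := by
      rw [hsdef, Set.Finite.toFinset_nonempty]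
      exact htne
    set δ := s.inf' hsne (fun a => r a / 2) with hδdef
    have hδpos : 0 < δ := by
      rw [hδdef, Finset.lt_inf'_iff]
      intro a hasmem
      have haE : a ∈ E := htE (htfin.mem_toFinset.mp hasmem)
      linarith [hr a haE]
    set C₀ := s.sup' hsne C with hC₀def
    have hnear : ∀ w₁ ∈ E, ∀ w₂ ∈ E, dist w₂ w₁ < δ → ∀ c : ℝ, C₀ ≤ c →
        c⁻¹ * dist w₂ w₁ ≤ dist (h w₂) (h w₁) ∧ dist (h w₂) (h w₁) ≤ c * dist w₂ w₁ := by
      intro w₁ hw₁ w₂ hw₂ hdd c hc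
      obtain ⟨a, hat, hw₁b⟩ : ∃ a ∈ t, w₁ ∈ ball a (r a / 2) := by
        have := htcov hw₁
        simpa using this
      have has : a ∈ s := htfin.mem_toFinset.mpr hat
      have haE : a ∈ E := htE hat
      have hδa : δ ≤ r a / 2 := Finset.inf'_le _ has
      have hw₁b' : w₁ ∈ ball a (r a) := by
        rw [mem_ball] at hw₁b ⊢; linarith [hr a haE]
      have hw₂b : w₂ ∈ ball a (r a) := by
        rw [mem_ball] at hw₁b ⊢
        calc dist w₂ a ≤ dist w₂ w₁ + dist w₁ a := dist_triangle _ _ _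
          _ < δ + r a / 2 := by linarith
          _ ≤ r a := by linarith
      obtain ⟨hlow, hup⟩ := hbl a haE w₂ hw₂b w₁ hw₁b'
      have hCa : C a ≤ C₀ := Finset.le_sup' _ has
      have hCa1 : 1 ≤ C a := hC1 a haE
      constructor
      · calc c⁻¹ * dist w₂ w₁ ≤ (C a)⁻¹ * dist w₂ w₁ := by
              apply mul_le_mul_of_nonneg_right _ dist_nonneg
              exact inv_anti₀ (by linarith) (le_trans hCa hc)
          _ ≤ _ := hlow
      · calc dist (h w₂) (h w₁) ≤ C a * dist w₂ w₁ := hup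
          _ ≤ c * dist w₂ w₁ :=
            mul_le_mul_of_nonneg_right (le_trans hCa hc) dist_nonneg
    have hC₀1 : 1 ≤ C₀ := by
      obtain ⟨a, has⟩ := hsne
      exact le_trans (hC1 a (htE (htfin.mem_toFinset.mp has))) (Finset.le_sup' _ has)
    have hcontE : ContinuousOn h E := (hh.continuousOn).mono hEG
    have himg : IsCompact (h '' E) := hE.image_of_continuousOn hcontE
    set Dh := Metric.diam (h '' E) with hDhdef
    set dE := Metric.diam E with hdEdef
    have hSc : IsCompact ((E ×ˢ E) ∩ {p : ℂ × ℂ | δ ≤ dist p.1 p.2}) := (hE.prod hE).inter_right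
      (isClosed_le continuous_const (continuous_fst.dist continuous_snd))
    rcases ((E ×ˢ E) ∩ {p : ℂ × ℂ | δ ≤ dist p.1 p.2}).eq_empty_or_nonempty with hSe | hSne
    · refine ⟨C₀, hC₀1, fun w₁ hw₁ w₂ hw₂ => ?_⟩
      have hclose : dist w₂ w₁ < δ := by
        by_contra hdd
        rw [not_lt] at hdd
        have hmem : (w₂, w₁) ∈ (E ×ˢ E) ∩ {p : ℂ × ℂ | δ ≤ dist p.1 p.2} :=
          ⟨⟨hw₂, hw₁⟩, hdd⟩
        rw [hSe] at hmem
        exact hmem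
      exact hnear w₁ hw₁ w₂ hw₂ hclose C₀ le_rfl
    · have hφc : ContinuousOn (fun p : ℂ × ℂ => dist (h p.1) (h p.2))
          ((E ×ˢ E) ∩ {p : ℂ × ℂ | δ ≤ dist p.1 p.2}) := by
        have hm1 : Set.MapsTo (Prod.fst : ℂ × ℂ → ℂ)
            ((E ×ˢ E) ∩ {p : ℂ × ℂ | δ ≤ dist p.1 p.2}) E := fun p hp => hp.1.1
        have hm2 : Set.MapsTo (Prod.snd : ℂ × ℂ → ℂ)
            ((E ×ˢ E) ∩ {p : ℂ × ℂ | δ ≤ dist p.1 p.2}) E := fun p hp => hp.1.2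
        exact continuous_dist.comp_continuousOn
          ((hcontE.comp continuousOn_fst hm1).prodMk (hcontE.comp continuousOn_snd hm2))
      obtain ⟨p₀, hp₀S, hmin⟩ := hSc.exists_isMinOn hSne hφc
      set ε := dist (h p₀.1) (h p₀.2) with hεdef
      have hminS : ∀ q ∈ (E ×ˢ E) ∩ {p : ℂ × ℂ | δ ≤ dist p.1 p.2},
          ε ≤ dist (h q.1) (h q.2) := fun q hq => isMinOn_iff.mp hmin q hq
      have hεpos : 0 < ε := by
        have hne : p₀.1 ≠ p₀.2 := by
          intro heq
          have h2 := hp₀S.2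
          rw [Set.mem_setOf_eq, heq] at h2
          simp at h2
          linarith
        rw [hεdef, dist_pos]
        intro heq
        exact hne (hinj (hEG hp₀S.1.1) (hEG hp₀S.1.2) heq)
      refine ⟨max C₀ (max (Dh / δ) (dE / ε)), le_trans hC₀1 (le_max_left _ _), ?_⟩
      intro w₁ hw₁ w₂ hw₂
      set c := max C₀ (max (Dh / δ) (dE / ε)) with hcdef
      by_cases hclose : dist w₂ w₁ < δ
      · exact hnear w₁ hw₁ w₂ hw₂ hclose c (le_max_left _ _)
      · rw [not_lt] at hclose
        have hmem : (w₂, w₁) ∈ (E ×ˢ E) ∩ {p : ℂ × ℂ | δ ≤ dist p.1 p.2} :=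
          ⟨⟨hw₂, hw₁⟩, hclose⟩
        have hεle : ε ≤ dist (h w₂) (h w₁) := hminS (w₂, w₁) hmem
        have hc1 : (1:ℝ) ≤ c := le_trans hC₀1 (le_max_left _ _)
        constructor
        · have hdE : dist w₂ w₁ ≤ dE :=
            Metric.dist_le_diam_of_mem hE.isBounded hw₂ hw₁
          have hcdE : dE / ε ≤ c := le_trans (le_max_right _ _) (le_max_right _ _)
          have hkey : c⁻¹ * dist w₂ w₁ ≤ ε := by
            rw [inv_mul_le_iff₀ (by linarith : (0:ℝ) < c)]
            calc dist w₂ w₁ ≤ dE := hdE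
              _ = dE / ε * ε := by field_simp
              _ ≤ c * ε := mul_le_mul_of_nonneg_right hcdE hεpos.le
          linarith
        · have hDh : dist (h w₂) (h w₁) ≤ Dh :=
            Metric.dist_le_diam_of_mem himg.isBounded
              (mem_image_of_mem h hw₂) (mem_image_of_mem h hw₁)
          have hcDh : Dh / δ ≤ c := le_trans (le_max_left _ _) (le_max_right _ _)
          calc dist (h w₂) (h w₁) ≤ Dh := hDh
            _ = Dh / δ * δ := by field_simp
            _ ≤ c * dist w₂ w₁ := mul_le_mul hcDh hclose hδpos.le (by linarith)
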